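/- Let V be an (n+m)-dimensional vector space, Ω a nonzero element of Λ^{n+m} V*, F a symmetric n-density on V, and μ = |Ω| the associated top density. Define ι*_Ω : Λⁿ V → Λᵐ V* by ι*_Ω(θ)(η) = Ω(η ∧ θ) (extended via the canonical pairing). Then ι*_Ω is a linear isomorphism mapping simple n-vectors to simple m-covectors, and the codensity satisfies F*_{|Ω|} = F ∘ (ι*_Ω)⁻¹ on simple m-covectors. -/

import Mathlib

open ExteriorAlgebra Module

variable {V : Type*} [AddCommGroup V] [Module ℝ V]

/-- The Hodge-type map `ι*_Ω : Λⁿ V → Λᵐ V*`, `ι*_Ω(θ)(η) = Ω(η ∧ θ)`, where `Λᵐ V*` is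
identified with the dual of `Λᵐ V` via the canonical pairing. -/
noncomputable def iotaOmega (m n : ℕ) (Ω : ExteriorAlgebra ℝ V →ₗ[ℝ] ℝ)
    (θ : ⋀[ℝ]^n V) : ⋀[ℝ]^m V →ₗ[ℝ] ℝ :=
  (Ω.comp (LinearMap.mulRight ℝ (θ : ExteriorAlgebra ℝ V))).domRestrict (⋀[ℝ]^m V)

lemma ιMulti_mul_eq (p q : ℕ) (u : Fin p → V) (w : Fin q → V) :
    ιMulti ℝ p u * ιMulti ℝ q w = ιMulti ℝ (p + q) (Fin.append u w) := by
  rw [ιMulti_apply, ιMulti_apply, ιMulti_apply, List.ofFn_add, List.prod_append]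
  simp [Fin.append_left, Fin.append_right]

lemma alt_expand {N : Type*} [AddCommGroup N] [Module ℝ N] {p : ℕ} {ι : Type*} [Fintype ι]
    [DecidableEq ι] (g : V [⋀^Fin p]→ₗ[ℝ] N) (b : Basis ι ℝ V) (u : Fin p → V) :
    g u = ∑ f : Fin p → ι, (∏ j, b.repr (u j) (f j)) • g (b ∘ f) := by
  have h1 : g u = g (fun i => ∑ k : ι, b.repr (u i) k • b k) := by
    congr 1; funext i; rw [Basis.sum_repr]
  have h2 : g.toMultilinearMap (fun i => ∑ k : ι, b.repr (u i) k • b k)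
      = ∑ f : Fin p → ι, g.toMultilinearMap (fun i => b.repr (u i) (f i) • b (f i)) :=
    g.toMultilinearMap.map_sum (g := fun i k => b.repr (u i) k • b k)
  rw [h1]
  refine h2.trans ?_
  apply Finset.sum_congr rfl
  intro f _
  exact g.toMultilinearMap.map_smul_univ (fun j => b.repr (u j) (f j)) (b ∘ f)

lemma comp_eq_sign_smul {q N : ℕ} (b : Basis (Fin N) ℝ V) (f : Fin q → Fin N)
    (hf : Function.Injective f) (s : Finset (Fin N)) (hs : s.card = q)
    (him : ∀ i, f i ∈ s) :
    ∃ ε : ℤˣ, ιMulti ℝ q (⇑b ∘ f) = (ε : ℤ) • ιMulti ℝ q (fun i => b (s.orderIsoOfFin hs i)) := by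
  classical
  set g : Fin q → Fin q := fun i => (s.orderIsoOfFin hs).symm ⟨f i, him i⟩ with hg
  have hginj : Function.Injective g := by
    intro i j hij
    apply hf
    have := congrArg (fun x => ((s.orderIsoOfFin hs) x : Fin N)) hij
    simpa [hg] using this
  have hgbij : Function.Bijective g := Finite.injective_iff_bijective.mp hginj
  set σ : Equiv.Perm (Fin q) := Equiv.ofBijective g hgbij with hσ
  refine ⟨Equiv.Perm.sign σ, ?_⟩
  have hcomp : ⇑b ∘ f = (fun i => b (s.orderIsoOfFin hs i)) ∘ ⇑σ := by
    funext i
    simp only [hσ, Equiv.ofBijective_apply, hg, Function.comp_apply]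
    congr 1
    have : ((s.orderIsoOfFin hs) ((s.orderIsoOfFin hs).symm ⟨f i, him i⟩) : Fin N) = f i := by
      rw [OrderIso.apply_symm_apply]
    simpa [Finset.orderIsoOfFin] using this.symm
  rw [hcomp, AlternatingMap.map_perm]
  norm_num [Units.smul_def]

/-- The simple wedge of basis vectors indexed by a finset of cardinality `q`. -/
noncomputable def eS {N : ℕ} (b : Basis (Fin N) ℝ V) {q : ℕ} (s : Finset (Fin N))
    (hs : s.card = q) : ExteriorAlgebra ℝ V :=
  ιMulti ℝ q (fun i => b (s.orderIsoOfFin hs i))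

lemma mem_span_eS {q N : ℕ} (b : Basis (Fin N) ℝ V) {θ : ExteriorAlgebra ℝ V}
    (hθ : θ ∈ ⋀[ℝ]^q V) :
    θ ∈ Submodule.span ℝ
      (Set.range (fun s : {s : Finset (Fin N) // s.card = q} => eS b s.1 s.2)) := by
  classical
  rw [← ιMulti_span_fixedDegree] at hθ
  refine Submodule.span_le.mpr ?_ hθ
  rintro x ⟨v, rfl⟩
  rw [alt_expand (ιMulti ℝ q) b v]
  apply Submodule.sum_mem
  intro f _
  apply Submodule.smul_mem
  by_cases hf : Function.Injective f
  · have hs : (Finset.univ.image f).card = q := by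
      rw [Finset.card_image_of_injective _ hf, Finset.card_univ, Fintype.card_fin]
    obtain ⟨ε, hε⟩ := comp_eq_sign_smul b f hf (Finset.univ.image f) hs
      (fun i => Finset.mem_image_of_mem f (Finset.mem_univ i))
    rw [hε]
    exact Submodule.smul_mem _ _ (Submodule.subset_span ⟨⟨_, hs⟩, rfl⟩)
  · rw [show ⇑b ∘ f = fun i => b (f i) from rfl,
      AlternatingMap.map_eq_zero_of_not_injective _ _ (fun h => hf (fun i j hij => ?_))]
    · exact Submodule.zero_mem _
    · exact h (congrArg b hij)

lemma append_basis_eq {p q N : ℕ} (b : Basis (Fin N) ℝ V) (g₁ : Fin p → Fin N)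
    (g₂ : Fin q → Fin N) :
    Fin.append (fun i => b (g₁ i)) (fun i => b (g₂ i)) = ⇑b ∘ Fin.append g₁ g₂ := by
  funext k
  induction k using Fin.addCases with
  | left i => simp [Fin.append_left]
  | right i => simp [Fin.append_right]

lemma eS_cross {p q N : ℕ} (hN : N = p + q) (b : Basis (Fin N) ℝ V)
    (s t : Finset (Fin N)) (hs : sᶜ.card = p) (ht : t.card = q) (hst : t ≠ s) :
    eS b sᶜ hs * eS b t ht = 0 := by
  classical
  obtain ⟨k, hk⟩ : (t \ s).Nonempty := by
    rw [Finset.sdiff_nonempty]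
    intro hsub
    apply hst
    apply Finset.eq_of_subset_of_card_le hsub
    have h1 := Finset.card_compl s (α := Fin N)
    have h2 := Finset.card_le_univ s (α := Fin N)
    simp only [Fintype.card_fin, Finset.card_univ] at h1 h2
    omega
  rw [Finset.mem_sdiff] at hk
  rw [eS, eS, ιMulti_mul_eq]
  set i₁ : Fin p := (sᶜ.orderIsoOfFin hs).symm ⟨k, Finset.mem_compl.2 hk.2⟩ with hi₁
  set i₂ : Fin q := (t.orderIsoOfFin ht).symm ⟨k, hk.1⟩ with hi₂
  apply AlternatingMap.map_eq_zero_of_eq _ _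
    (i := Fin.castAdd q i₁) (j := Fin.natAdd p i₂)
  · rw [Fin.append_left, Fin.append_right, hi₁, hi₂]
    congr 1
    · have : ((sᶜ.orderIsoOfFin hs) ((sᶜ.orderIsoOfFin hs).symm ⟨k, Finset.mem_compl.2 hk.2⟩) : Fin N) = k := by
        rw [OrderIso.apply_symm_apply]
      rw [this]
      have : ((t.orderIsoOfFin ht) ((t.orderIsoOfFin ht).symm ⟨k, hk.1⟩) : Fin N) = k := by
        rw [OrderIso.apply_symm_apply]
      rw [this]
  · intro hcontra
    have := congrArg Fin.val hcontra
    simp only [Fin.coe_castAdd, Fin.coe_natAdd] at this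
    omega


lemma eS_diag {p q : ℕ} (b : Basis (Fin (p + q)) ℝ V) (s : Finset (Fin (p + q)))
    (hs : sᶜ.card = p) (hsc : s.card = q) :
    ∃ ε : ℤˣ, eS b sᶜ hs * eS b s hsc = (ε : ℤ) • ιMulti ℝ (p + q) ⇑b := by
  classical
  rw [eS, eS, ιMulti_mul_eq, append_basis_eq]
  set h : Fin (p + q) → Fin (p + q) :=
    Fin.append (fun i => ((sᶜ.orderIsoOfFin hs) i : Fin (p + q)))
      (fun i => ((s.orderIsoOfFin hsc) i : Fin (p + q))) with hh
  have hinj : Function.Injective h := by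
    intro x y hxy
    induction x using Fin.addCases with
    | left x₁ =>
      induction y using Fin.addCases with
      | left y₁ =>
        rw [hh, Fin.append_left, Fin.append_left] at hxy
        have : x₁ = y₁ := by
          apply (sᶜ.orderIsoOfFin hs).injective
          exact Subtype.ext hxy
        rw [this]
      | right y₂ =>
        rw [hh, Fin.append_left, Fin.append_right] at hxy
        exfalso
        have h1 := ((sᶜ.orderIsoOfFin hs) x₁).2
        have h2 := ((s.orderIsoOfFin hsc) y₂).2
        rw [hxy] at h1
        exact (Finset.mem_compl.1 h1) h2
    | right x₂ =>
      induction y using Fin.addCases with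
      | left y₁ =>
        rw [hh, Fin.append_right, Fin.append_left] at hxy
        exfalso
        have h1 := ((s.orderIsoOfFin hsc) x₂).2
        have h2 := ((sᶜ.orderIsoOfFin hs) y₁).2
        rw [← hxy] at h2
        exact (Finset.mem_compl.1 h2) h1
      | right y₂ =>
        rw [hh, Fin.append_right, Fin.append_right] at hxy
        have : x₂ = y₂ := by
          apply (s.orderIsoOfFin hsc).injective
          exact Subtype.ext hxy
        rw [this]
  obtain ⟨ε, hε⟩ := comp_eq_sign_smul b h hinj Finset.univ
    (by simp) (fun i => Finset.mem_univ _)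
  refine ⟨ε, hε.trans ?_⟩
  have huniv : ∀ (hu : (Finset.univ : Finset (Fin (p+q))).card = p + q) (i : Fin (p+q)),
      Finset.univ.orderEmbOfFin hu i = i := by
    intro hu i
    have h2 := Finset.orderEmbOfFin_unique hu
      (f := (id : Fin (p+q) → Fin (p+q))) (fun x => Finset.mem_univ _) strictMono_id
    exact (congrFun h2 i).symm
  have harg : ∀ (hu : (Finset.univ : Finset (Fin (p+q))).card = p + q),
      (fun i : Fin (p+q) => b ((Finset.univ.orderIsoOfFin hu) i : Fin (p+q))) = ⇑b := by
    intro hu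
    funext i
    rw [Finset.coe_orderIsoOfFin_apply, huniv]
  rw [harg]

lemma top_span {N : ℕ} (b : Basis (Fin N) ℝ V) {ξ : ExteriorAlgebra ℝ V}
    (hξ : ξ ∈ ⋀[ℝ]^N V) : ∃ c : ℝ, ξ = c • ιMulti ℝ N ⇑b := by
  classical
  obtain ⟨c, hc⟩ := (Submodule.mem_span_range_iff_exists_fun ℝ).1 (mem_span_eS b hξ)
  have huniv : ((Finset.univ : Finset (Fin N))).card = N := by simp
  have hS : ∀ s : {s : Finset (Fin N) // s.card = N}, s.1 = Finset.univ := by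
    rintro ⟨s, hs⟩
    apply Finset.eq_univ_of_card
    simpa using hs
  have heSall : ∀ s : {s : Finset (Fin N) // s.card = N}, eS b s.1 s.2 = ιMulti ℝ N ⇑b := by
    intro s
    have hs := hS s
    rw [eS]
    have harg : (fun i : Fin N => b ((s.1.orderIsoOfFin s.2) i : Fin N)) = ⇑b := by
      funext i
      congr 1
      rw [Finset.coe_orderIsoOfFin_apply]
      have h2 := Finset.orderEmbOfFin_unique (s := s.1) s.2
        (f := (id : Fin N → Fin N))
        (fun x => by rw [hs]; exact Finset.mem_univ _) strictMono_id
      exact (congrFun h2 i).symm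
    rw [harg]
  refine ⟨∑ s, c s, ?_⟩
  rw [← hc, Finset.sum_smul]
  exact Finset.sum_congr rfl fun s _ => by rw [heSall]

lemma Omega_top_ne {N : ℕ} (b : Basis (Fin N) ℝ V) (Ω : ExteriorAlgebra ℝ V →ₗ[ℝ] ℝ)
    {ξ : ExteriorAlgebra ℝ V} (hξ : ξ ∈ ⋀[ℝ]^N V) (hΩ : Ω ξ ≠ 0) :
    Ω (ιMulti ℝ N ⇑b) ≠ 0 := by
  obtain ⟨c, rfl⟩ := top_span b hξ
  intro h
  rw [map_smul, h, smul_zero] at hΩ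
  exact hΩ rfl

lemma nondeg {p q : ℕ} (b : Basis (Fin (p + q)) ℝ V) (Ω : ExteriorAlgebra ℝ V →ₗ[ℝ] ℝ)
    (hΩb : Ω (ιMulti ℝ (p + q) ⇑b) ≠ 0) {θ : ExteriorAlgebra ℝ V} (hθ : θ ∈ ⋀[ℝ]^q V)
    (hpair : ∀ η ∈ ⋀[ℝ]^p V, Ω (η * θ) = 0) : θ = 0 := by
  classical
  obtain ⟨c, hc⟩ := (Submodule.mem_span_range_iff_exists_fun ℝ).1 (mem_span_eS b hθ)
  suffices hzero : ∀ s : {s : Finset (Fin (p + q)) // s.card = q}, c s = 0 by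
    rw [← hc]
    simp [hzero]
  intro s
  have hsC : (s.1ᶜ).card = p := by
    have h1 := Finset.card_compl s.1 (α := Fin (p + q))
    have h2 := s.2
    simp only [Fintype.card_fin] at h1
    omega
  have hη : eS b s.1ᶜ hsC ∈ ⋀[ℝ]^p V := ιMulti_range ℝ p (Set.mem_range_self _)
  have h0 := hpair _ hη
  rw [← hc, Finset.mul_sum, map_sum] at h0
  rw [Finset.sum_eq_single s (fun t _ hts => ?_) (fun hs => absurd (Finset.mem_univ s) hs)] at h0
  · obtain ⟨ε, hε⟩ := eS_diag b s.1 hsC s.2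
    rw [mul_smul_comm, hε, map_smul, map_zsmul] at h0
    rcases Int.units_eq_one_or ε with h | h <;>
      · rw [h] at h0
        simp only [Units.val_one, Units.val_neg, one_smul, neg_smul, smul_eq_mul,
          mul_neg, neg_eq_zero, mul_eq_zero] at h0
        tauto
  · rw [mul_smul_comm, eS_cross rfl b s.1 t.1 hsC t.2 (fun h => hts (Subtype.ext h)),
      smul_zero, map_zero]

lemma iotaOmega_apply (m n : ℕ) (Ω : ExteriorAlgebra ℝ V →ₗ[ℝ] ℝ)
    (θ : ⋀[ℝ]^n V) (η : ⋀[ℝ]^m V) :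
    iotaOmega m n Ω θ η = Ω ((η : ExteriorAlgebra ℝ V) * (θ : ExteriorAlgebra ℝ V)) := rfl

/-- `iotaOmega` bundled as a linear map in `θ`. -/
noncomputable def iotaL (m n : ℕ) (Ω : ExteriorAlgebra ℝ V →ₗ[ℝ] ℝ) :
    (⋀[ℝ]^n V) →ₗ[ℝ] ((⋀[ℝ]^m V) →ₗ[ℝ] ℝ) where
  toFun := iotaOmega m n Ω
  map_add' θ₁ θ₂ := by
    ext η
    simp [iotaOmega_apply, mul_add]
  map_smul' a θ := by
    ext η
    simp [iotaOmega_apply, mul_smul_comm]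

lemma fd_power {N : ℕ} (b : Basis (Fin N) ℝ V) (q : ℕ) :
    FiniteDimensional ℝ (⋀[ℝ]^q V) := by
  have hle : ⋀[ℝ]^q V ≤ Submodule.span ℝ
      (Set.range fun s : {s : Finset (Fin N) // s.card = q} => eS b s.1 s.2) :=
    fun x hx => mem_span_eS b hx
  have : FiniteDimensional ℝ (Submodule.span ℝ
      (Set.range fun s : {s : Finset (Fin N) // s.card = q} => eS b s.1 s.2)) :=
    FiniteDimensional.span_of_finite ℝ (Set.finite_range _)
  exact Submodule.finiteDimensional_of_le hle

lemma iota_inj {p q : ℕ} (b : Basis (Fin (p + q)) ℝ V) (Ω : ExteriorAlgebra ℝ V →ₗ[ℝ] ℝ)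
    (hΩb : Ω (ιMulti ℝ (p + q) ⇑b) ≠ 0) :
    Function.Injective (iotaL p q Ω (V := V)) := by
  rw [← LinearMap.ker_eq_bot, LinearMap.ker_eq_bot']
  intro θ hθ
  have hz : (θ : ExteriorAlgebra ℝ V) = 0 := by
    apply nondeg b Ω hΩb θ.2
    intro η hη
    have := congrFun (congrArg DFunLike.coe hθ) ⟨η, hη⟩
    simpa [iotaL, iotaOmega_apply] using this
  exact Subtype.ext hz

lemma iota_bij {m n : ℕ} [FiniteDimensional ℝ V] (hV : finrank ℝ V = m + n)
    (Ω : ExteriorAlgebra ℝ V →ₗ[ℝ] ℝ)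
    (hΩ : ∃ ξ ∈ ⋀[ℝ]^(m + n) V, Ω ξ ≠ 0) :
    Function.Bijective (iotaL m n Ω (V := V)) := by
  classical
  obtain ⟨ξ, hξ, hξΩ⟩ := hΩ
  set b : Basis (Fin (m + n)) ℝ V := Module.finBasisOfFinrankEq ℝ V hV with hb
  set b' : Basis (Fin (n + m)) ℝ V :=
    Module.finBasisOfFinrankEq ℝ V (by omega : finrank ℝ V = n + m) with hb'
  have hΩb : Ω (ιMulti ℝ (m + n) ⇑b) ≠ 0 := Omega_top_ne b Ω hξ hξΩ
  have hmem' : ξ ∈ ⋀[ℝ]^(n + m) V := by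
    have : ⋀[ℝ]^(n + m) V = ⋀[ℝ]^(m + n) V := by rw [Nat.add_comm]
    rw [this]
    exact hξ
  have hΩb' : Ω (ιMulti ℝ (n + m) ⇑b') ≠ 0 := Omega_top_ne b' Ω hmem' hξΩ
  have hinj : Function.Injective (iotaL m n Ω (V := V)) := iota_inj b Ω hΩb
  have hinj' : Function.Injective (iotaL n m Ω (V := V)) := iota_inj b' Ω hΩb'
  have fd1 : FiniteDimensional ℝ (⋀[ℝ]^n V) := fd_power b n
  have fd2 : FiniteDimensional ℝ (⋀[ℝ]^m V) := fd_power b m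
  have hle1 : finrank ℝ (⋀[ℝ]^n V) ≤ finrank ℝ (⋀[ℝ]^m V) := by
    have := LinearMap.finrank_le_finrank_of_injective hinj
    rwa [Subspace.dual_finrank_eq] at this
  have hle2 : finrank ℝ (⋀[ℝ]^m V) ≤ finrank ℝ (⋀[ℝ]^n V) := by
    have := LinearMap.finrank_le_finrank_of_injective hinj'
    rwa [Subspace.dual_finrank_eq] at this
  have heq : finrank ℝ (⋀[ℝ]^n V) = finrank ℝ (Module.Dual ℝ (⋀[ℝ]^m V)) := by
    rw [Subspace.dual_finrank_eq]
    omega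
  exact ⟨hinj, (LinearMap.injective_iff_surjective_of_finrank_eq_finrank heq).1 hinj⟩

lemma det_identity {m n : ℕ} (Ω : ExteriorAlgebra ℝ V →ₗ[ℝ] ℝ)
    (B : Basis (Fin m ⊕ Fin n) ℝ V) (u : Fin m → V) :
    Ω (ιMulti ℝ m u * ιMulti ℝ n fun j => B (Sum.inr j)) =
      Ω (ιMulti ℝ (m + n) fun k => B (finSumFinEquiv.symm k)) *
        Matrix.det (Matrix.of fun i j => B.coord (Sum.inl i) (u j)) := by
  classical
  set w : ExteriorAlgebra ℝ V := ιMulti ℝ n fun j => B (Sum.inr j) with hw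
  set c : ℝ := Ω (ιMulti ℝ (m + n) fun k => B (finSumFinEquiv.symm k)) with hc
  set G : V [⋀^Fin m]→ₗ[ℝ] ℝ :=
    (Ω.comp (LinearMap.mulRight ℝ w)).compAlternatingMap (ιMulti ℝ m) with hG
  set L : V →ₗ[ℝ] (Fin m → ℝ) := LinearMap.pi (fun i => B.coord (Sum.inl i)) with hL
  set D : V [⋀^Fin m]→ₗ[ℝ] ℝ := (Matrix.detRowAlternating).compLinearMap L with hD
  have hGu : ∀ v : Fin m → V, G v = Ω (ιMulti ℝ m v * w) := fun v => rfl
  have hDu : ∀ v : Fin m → V, D v = Matrix.det (Matrix.of fun j i => B.coord (Sum.inl i) (v j)) :=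
    fun v => rfl
  have hdet : Matrix.det (Matrix.of fun i j => B.coord (Sum.inl i) (u j)) = D u := by
    rw [hDu, ← Matrix.det_transpose]
    congr 1
  rw [← hGu, hdet]
  -- key pointwise lemma
  have key : ∀ f : Fin m → (Fin m ⊕ Fin n), G (⇑B ∘ f) = c * D (⇑B ∘ f) := by
    intro f
    by_cases hf : Function.Injective f
    · by_cases hinr : ∃ j x, f j = Sum.inr x
      · obtain ⟨j₀, x, hj₀⟩ := hinr
        have hG0 : G (⇑B ∘ f) = 0 := by
          rw [hGu, hw, ιMulti_mul_eq]
          rw [AlternatingMap.map_eq_zero_of_eq _ _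
            (i := Fin.castAdd n j₀) (j := Fin.natAdd m x) ?_ ?_, map_zero]
          · rw [Fin.append_left, Fin.append_right, Function.comp_apply, hj₀]
          · intro hcontra
            have := congrArg Fin.val hcontra
            simp only [Fin.coe_castAdd, Fin.coe_natAdd] at this
            omega
        have hD0 : D (⇑B ∘ f) = 0 := by
          rw [hDu]
          apply Matrix.det_eq_zero_of_row_eq_zero j₀
          intro i
          simp [hj₀, Basis.coord_apply, Basis.repr_self, Finsupp.single_apply]
        rw [hG0, hD0, mul_zero]
      · -- all values in the left component
        push_neg at hinr
        have hchoice : ∀ j, ∃ x, f j = Sum.inl x := by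
          intro j
          cases hfj : f j with
          | inl x => exact ⟨x, rfl⟩
          | inr x => exact absurd hfj (hinr j x)
        choose g hg using hchoice
        have hginj : Function.Injective g := by
          intro i j hij
          apply hf
          rw [hg, hg, hij]
        set σ : Equiv.Perm (Fin m) := Equiv.ofBijective g
          (Finite.injective_iff_bijective.mp hginj) with hσ
        have hfσ : ⇑B ∘ f = (⇑B ∘ Sum.inl) ∘ ⇑σ := by
          funext j
          simp [hσ, Equiv.ofBijective_apply, hg j]
        have hGside : G (⇑B ∘ f) = (Equiv.Perm.sign σ : ℤ) * c := by
          rw [hfσ]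
          have := G.map_perm (⇑B ∘ Sum.inl) σ
          rw [this]
          have hbase : G (⇑B ∘ Sum.inl) = c := by
            rw [hGu, hw, ιMulti_mul_eq, hc]
            have harg : Fin.append (⇑B ∘ Sum.inl) (fun j => B (Sum.inr j))
                = fun k => B (finSumFinEquiv.symm k) := by
              funext k
              induction k using Fin.addCases with
              | left i => rw [Fin.append_left, finSumFinEquiv_symm_apply_castAdd]; rfl
              | right i => rw [Fin.append_right, finSumFinEquiv_symm_apply_natAdd]
            rw [harg]
          rw [hbase, Units.smul_def, zsmul_eq_mul]
        have hDside : D (⇑B ∘ f) = (Equiv.Perm.sign σ : ℤ) := by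
          rw [hDu]
          have hmat : (Matrix.of fun j i => B.coord (Sum.inl i) ((⇑B ∘ f) j))
              = Equiv.Perm.permMatrix ℝ σ := by
            funext j i
            simp only [Matrix.of_apply, Function.comp_apply, hg j, Basis.coord_apply,
              Basis.repr_self, Finsupp.single_apply, Equiv.Perm.permMatrix,
              PEquiv.toMatrix_apply, Equiv.toPEquiv_apply, Option.mem_def,
              Option.some.injEq, Sum.inl.injEq]
            simp only [hσ, Equiv.ofBijective_apply]
          rw [hmat, Matrix.det_permutation]
        rw [hGside, hDside, mul_comm]
    · have hBf : ¬ Function.Injective (⇑B ∘ f) := by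
        intro h
        exact hf (fun i j hij => h (by simp [Function.comp_apply, hij]))
      rw [AlternatingMap.map_eq_zero_of_not_injective _ _ hBf,
        AlternatingMap.map_eq_zero_of_not_injective _ _ hBf, mul_zero]
  rw [alt_expand G B u, alt_expand D B u, Finset.mul_sum]
  apply Finset.sum_congr rfl
  intro f _
  rw [key f, smul_eq_mul, smul_eq_mul]
  ring

lemma power0_eq_one : (⋀[ℝ]^0 V) = (1 : Submodule ℝ (ExteriorAlgebra ℝ V)) :=
  pow_zero _

lemma one_mem_power0 : (1 : ExteriorAlgebra ℝ V) ∈ ⋀[ℝ]^0 V := by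
  rw [power0_eq_one]
  exact Submodule.one_le.mp le_rfl

lemma mem_power0 {x : ExteriorAlgebra ℝ V} (hx : x ∈ ⋀[ℝ]^0 V) :
    ∃ c : ℝ, x = c • (1 : ExteriorAlgebra ℝ V) := by
  rw [power0_eq_one] at hx
  obtain ⟨y, hy⟩ := Submodule.mem_one.mp hx
  exact ⟨y, by rw [← hy, Algebra.algebraMap_eq_smul_one]⟩

lemma iota_bij_deg {Ω : ExteriorAlgebra ℝ V →ₗ[ℝ] ℝ}
    (hΩ1 : Ω 1 ≠ 0) : Function.Bijective (iotaOmega 0 0 Ω (V := V)) := by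
  constructor
  · intro θ₁ θ₂ h
    obtain ⟨c₁, hc₁⟩ := mem_power0 θ₁.2
    obtain ⟨c₂, hc₂⟩ := mem_power0 θ₂.2
    have := congrFun (congrArg DFunLike.coe h) ⟨1, one_mem_power0⟩
    rw [iotaOmega_apply, iotaOmega_apply, hc₁, hc₂] at this
    simp only [one_mul, map_smul, smul_eq_mul] at this
    have hc : c₁ = c₂ := by
      field_simp at this
      exact this
    exact Subtype.ext (by rw [hc₁, hc₂, hc])
  · intro L
    refine ⟨(L ⟨1, one_mem_power0⟩ / Ω 1) • ⟨1, one_mem_power0⟩, ?_⟩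
    refine LinearMap.ext fun η => ?_
    obtain ⟨d, hd⟩ := mem_power0 η.2
    rw [iotaOmega_apply]
    have hηd : η = d • (⟨1, one_mem_power0⟩ : ⋀[ℝ]^0 V) := Subtype.ext (by rw [hd]; rfl)
    rw [hηd]
    simp only [SetLike.val_smul, Submodule.coe_smul_of_tower, smul_eq_mul, map_smul,
      LinearMap.map_smul, smul_mul_smul_comm, one_mul, smul_eq_mul]
    field_simp

/-- Let `V` be `(n+m)`-dimensional, `Ω` a nonzero top form, `F` a symmetric
`n`-density on `V`. Then `ι*_Ω` is a linear isomorphism mapping simple `n`-vectors to simple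
`m`-covectors, and the codensity satisfies `F*_{|Ω|} = F ∘ (ι*_Ω)⁻¹` on simple `m`-covectors:
for every basis `v₁,…,v_m,w₁,…,w_n` of `V`, `ι*_Ω(w₁∧…∧w_n)` is `Ω(v∧w)` times the simple
covector `v₁*∧…∧v_m*` (viewed, via the canonical pairing, as the functional
`u₁∧…∧u_m ↦ det(vᵢ*(u_j))`), and `F((ι*_Ω)⁻¹(v₁*∧…∧v_m*)) = F(w₁∧…∧w_n)/|Ω(v∧w)|`. -/
theorem stmt_2 {n m : ℕ} (hV : finrank ℝ V = m + n)
    (Ω : ExteriorAlgebra ℝ V →ₗ[ℝ] ℝ)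
    (hΩ : ∃ ξ ∈ ⋀[ℝ]^(m + n) V, Ω ξ ≠ 0)
    (F : ExteriorAlgebra ℝ V → ℝ)
    (hFnonneg : ∀ ξ ∈ ⋀[ℝ]^n V, 0 ≤ F ξ)
    (hFhom : ∀ a : ℝ, 0 ≤ a → ∀ ξ ∈ ⋀[ℝ]^n V, F (a • ξ) = a * F ξ)
    (hFzero : ∀ v : Fin n → V, (F (ιMulti ℝ n v) = 0 ↔ ιMulti ℝ n v = 0))
    (hFsymm : ∀ ξ ∈ ⋀[ℝ]^n V, F (-ξ) = F ξ) :
    Function.Bijective (iotaOmega m n Ω) ∧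
    (∀ B : Basis (Fin m ⊕ Fin n) ℝ V, ∀ u : Fin m → V,
      Ω (ιMulti ℝ m u * ιMulti ℝ n fun j => B (Sum.inr j)) =
        Ω (ιMulti ℝ (m + n) fun k => B (finSumFinEquiv.symm k)) *
          Matrix.det (Matrix.of fun i j => B.coord (Sum.inl i) (u j))) ∧
    (∀ B : Basis (Fin m ⊕ Fin n) ℝ V,
      F ((Function.invFun (iotaOmega m n Ω)
            ((Ω (ιMulti ℝ (m + n) fun k => B (finSumFinEquiv.symm k)))⁻¹ •
              iotaOmega m n Ω
                ⟨ιMulti ℝ n fun j => B (Sum.inr j),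
                  ExteriorAlgebra.ιMulti_range ℝ n (Set.mem_range_self _)⟩) :
          ⋀[ℝ]^n V) : ExteriorAlgebra ℝ V) =
        F (ιMulti ℝ n fun j => B (Sum.inr j)) /
          |Ω (ιMulti ℝ (m + n) fun k => B (finSumFinEquiv.symm k))|) := by
  classical
  refine ⟨?_, fun B u => det_identity Ω B u, ?_⟩
  · -- bijectivity
    by_cases hmn : m + n = 0
    · obtain ⟨hm, hn⟩ : m = 0 ∧ n = 0 := by omega
      subst hm; subst hn
      obtain ⟨ξ, hξ, hξΩ⟩ := hΩ
      obtain ⟨c₀, rfl⟩ := mem_power0 hξ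
      have hΩ1 : Ω (1 : ExteriorAlgebra ℝ V) ≠ 0 := by
        intro h
        rw [map_smul, h, smul_zero] at hξΩ
        exact hξΩ rfl
      exact iota_bij_deg hΩ1
    · have : FiniteDimensional ℝ V := Module.finite_of_finrank_pos (by omega)
      exact iota_bij hV Ω hΩ
  · intro B
    have hfd : FiniteDimensional ℝ V := Module.Finite.of_basis B
    set b : Basis (Fin (m + n)) ℝ V := B.reindex finSumFinEquiv with hbdef
    have hbc : ⇑b = fun k => B (finSumFinEquiv.symm k) :=
      funext fun k => B.reindex_apply finSumFinEquiv k
    obtain ⟨ξ, hξ, hξΩ⟩ := hΩ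
    have hc : Ω (ιMulti ℝ (m + n) ⇑b) ≠ 0 := Omega_top_ne b Ω hξ hξΩ
    set c : ℝ := Ω (ιMulti ℝ (m + n) fun k => B (finSumFinEquiv.symm k)) with hcdef
    have hcne : c ≠ 0 := by rw [hcdef, ← hbc]; exact hc
    have hinj : Function.Injective (iotaOmega m n Ω (V := V)) :=
      iota_inj b Ω hc
    set ξn : ExteriorAlgebra ℝ V := ιMulti ℝ n fun j => B (Sum.inr j) with hξn
    have hmem : ξn ∈ ⋀[ℝ]^n V := ExteriorAlgebra.ιMulti_range ℝ n (Set.mem_range_self _)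
    set θ : ⋀[ℝ]^n V := ⟨ξn, hmem⟩ with hθ
    have hsm : c⁻¹ • iotaOmega m n Ω θ = iotaOmega m n Ω (c⁻¹ • θ) :=
      (map_smul (iotaL m n Ω) c⁻¹ θ).symm
    haveI : Nonempty (⋀[ℝ]^n V) := ⟨0⟩
    rw [hsm, Function.leftInverse_invFun hinj (c⁻¹ • θ)]
    have hcoe : ((c⁻¹ • θ : ⋀[ℝ]^n V) : ExteriorAlgebra ℝ V) = c⁻¹ • ξn := rfl
    rw [hcoe]
    rcases hcne.lt_or_gt with hneg | hpos
    · have h1 : c⁻¹ • ξn = -((-c⁻¹) • ξn) := by rw [neg_smul, neg_neg]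
      rw [h1, hFsymm _ (Submodule.smul_mem _ _ hmem),
        hFhom (-c⁻¹) (neg_nonneg.2 (inv_nonpos.2 hneg.le)) _ hmem, abs_of_neg hneg]
      field_simp
      rfl
    · rw [hFhom c⁻¹ (inv_nonneg.2 hpos.le) _ hmem, abs_of_pos hpos, div_eq_mul_inv, mul_comm]
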